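/- Let (X, Σ, μ) be a σ-finite non-atomic measure space, and let Φ₁, Φ₂ be Young functions such that Φ₂ is not weaker than Φ₁ (i.e., there is no a > 0 and x₀ with Φ₂(x) ≤ Φ₁(ax) for all x ≥ x₀). If T is a non-singular measurable transformation of X and u a measurable function, then the only bounded weighted composition operator M_{u,T}f = u·(f∘T) from L^{Φ₁}(Σ) to L^{Φ₂}(Σ) is the zero operator. -/

import Mathlib

open MeasureTheory Filter Topology
open scoped ENNReal NNReal

/-- A Young function: continuous, convex, even, vanishing exactly at 0,
with superlinear growth at infinity. -/
structure YoungFunction where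
  toFun : ℝ → ℝ
  continuous' : Continuous toFun
  convexOn' : ConvexOn ℝ Set.univ toFun
  even' : ∀ x, toFun (-x) = toFun x
  zero_iff' : ∀ x, toFun x = 0 ↔ x = 0
  tendsto_atTop' : Tendsto (fun x => toFun x / x) atTop atTop

instance : CoeFun YoungFunction fun _ => ℝ → ℝ := ⟨YoungFunction.toFun⟩

variable {X : Type*} [MeasurableSpace X]

/-- Membership in the Orlicz space `L^Φ(μ)`. -/
def MemOrlicz (Φ : YoungFunction) (μ : Measure X) (f : X → ℝ) : Prop :=
  AEStronglyMeasurable f μ ∧ ∃ k > 0, Integrable (fun x => Φ (k * f x)) μ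

/-- The Luxemburg norm on the Orlicz space `L^Φ(μ)`. -/
noncomputable def luxNorm (Φ : YoungFunction) (μ : Measure X) (f : X → ℝ) : ℝ :=
  sInf {k : ℝ | 0 < k ∧ ∫ x, Φ (f x / k) ∂μ ≤ 1}

/-- The generalized (right) inverse of a Young function on `[0,∞)`. -/
noncomputable def yInv (Φ : YoungFunction) (y : ℝ) : ℝ :=
  sSup {x : ℝ | 0 ≤ x ∧ Φ x ≤ y}

/-- `Φ` satisfies the `Δ₂` condition globally. -/
def YoungDeltaTwo (Φ : YoungFunction) : Prop :=
  ∃ k > 0, ∀ x : ℝ, 0 ≤ x → Φ (2 * x) ≤ k * Φ x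

/-- `Φ` satisfies the `Δ'` condition globally, with constant `c`. -/
def YoungDeltaPrime (Φ : YoungFunction) (c : ℝ) : Prop :=
  0 < c ∧ ∀ x y : ℝ, 0 ≤ x → 0 ≤ y → Φ (x * y) ≤ c * Φ x * Φ y

/-- `Φ` satisfies the `∇'` condition globally, with constant `b`. -/
def YoungNablaPrime (Φ : YoungFunction) (b : ℝ) : Prop :=
  0 < b ∧ ∀ x y : ℝ, 0 ≤ x → 0 ≤ y → Φ x * Φ y ≤ Φ (b * x * y)

/-- `Φ ≺ Ψ` : `Φ` is weaker than `Ψ`. -/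
def YoungWeaker (Φ Ψ : YoungFunction) : Prop :=
  ∃ a > 0, ∃ x₀ : ℝ, 0 ≤ x₀ ∧ ∀ x : ℝ, x₀ ≤ x → Φ x ≤ Ψ (a * x)

/-- `A` is an atom of the measure `μ`. -/
def IsAtomSet (μ : Measure X) (A : Set X) : Prop :=
  MeasurableSet A ∧ 0 < μ A ∧
    ∀ B : Set X, MeasurableSet B → B ⊆ A → μ B = 0 ∨ μ B = μ A

/-- `μ` is non-atomic on the set `S`. -/
def NonAtomicOn (μ : Measure X) (S : Set X) : Prop :=
  ∀ A : Set X, A ⊆ S → ¬ IsAtomSet μ A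

/-- A linear map between Orlicz spaces (given as a map on functions) is bounded. -/
def OrliczBounded (Φ₁ Φ₂ : YoungFunction) (μ : Measure X)
    (Tmap : (X → ℝ) → (X → ℝ)) : Prop :=
  ∃ C > 0, ∀ f : X → ℝ, MemOrlicz Φ₁ μ f →
    MemOrlicz Φ₂ μ (Tmap f) ∧ luxNorm Φ₂ μ (Tmap f) ≤ C * luxNorm Φ₁ μ f

/-- The atomic decomposition of a σ-finite measure space: `X = (⋃ n, A n) ∪ B`
with the `A n` pairwise disjoint atoms of finite measure and `B` non-atomic. -/
def AtomicDecomposition (μ : Measure X) (A : ℕ → Set X) (B : Set X) : Prop :=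
  (∀ n, IsAtomSet μ (A n)) ∧ (∀ n, μ (A n) < ⊤) ∧
    Pairwise (Function.onFun Disjoint A) ∧ (∀ n, Disjoint (A n) B) ∧
    MeasurableSet B ∧ NonAtomicOn μ B ∧ (⋃ n, A n) ∪ B = Set.univ

section Aux

open scoped ENNReal NNReal

namespace YoungFunction

variable (Φ : YoungFunction)

lemma zero : Φ 0 = 0 := (Φ.zero_iff' 0).2 rfl

lemma nonneg (x : ℝ) : 0 ≤ Φ x := by
  have h := Φ.convexOn'.2 (Set.mem_univ x) (Set.mem_univ (-x))
    (by norm_num : (0:ℝ) ≤ 1/2) (by norm_num : (0:ℝ) ≤ 1/2) (by norm_num)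
  simp only [smul_eq_mul] at h
  have hx : (1/2 : ℝ) * x + (1/2) * (-x) = 0 := by ring
  rw [hx, Φ.zero, Φ.even'] at h
  linarith

lemma pos {x : ℝ} (hx : x ≠ 0) : 0 < Φ x :=
  lt_of_le_of_ne (Φ.nonneg x) (fun h => hx ((Φ.zero_iff' x).1 h.symm))

lemma mono {x y : ℝ} (hx : 0 ≤ x) (hxy : x ≤ y) : Φ x ≤ Φ y := by
  rcases eq_or_lt_of_le (hx.trans hxy) with h | hy
  · rw [← h] at hxy ⊢
    have : x = 0 := le_antisymm hxy hx
    rw [this]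
  · -- x = t*y + (1-t)*(-y) with t = (x+y)/(2y)
    set t : ℝ := (x + y) / (2 * y) with ht
    have h2y : (0:ℝ) < 2 * y := by linarith
    have ht0 : 0 ≤ t := div_nonneg (by linarith) h2y.le
    have ht1 : t ≤ 1 := by
      rw [div_le_one h2y]; linarith
    have h := Φ.convexOn'.2 (Set.mem_univ y) (Set.mem_univ (-y)) ht0
      (by linarith : 0 ≤ 1 - t) (by ring)
    simp only [smul_eq_mul] at h
    have hx' : t * y + (1 - t) * (-y) = x := by
      have h2 : t * (2 * y) = x + y := by rw [ht]; exact div_mul_cancel₀ _ h2y.ne'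
      linarith
    rw [hx', Φ.even'] at h
    calc Φ x ≤ t * Φ y + (1 - t) * Φ y := h
    _ = Φ y := by ring

lemma abs_eq (x : ℝ) : Φ |x| = Φ x := by
  rcases abs_cases x with ⟨h, _⟩ | ⟨h, _⟩
  · rw [h]
  · rw [h, Φ.even']

lemma scale_le {c x : ℝ} (hc0 : 0 ≤ c) (hc1 : c ≤ 1) : Φ (c * x) ≤ c * Φ x := by
  have h := Φ.convexOn'.2 (Set.mem_univ x) (Set.mem_univ 0) hc0
    (by linarith : 0 ≤ 1 - c) (by ring)
  simp only [smul_eq_mul, mul_zero, add_zero, Φ.zero] at h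
  linarith [h]

/-- eventually Φ x ≥ M for large x -/
lemma eventually_ge (M : ℝ) : ∀ᶠ x in atTop, M ≤ Φ x := by
  have h := Φ.tendsto_atTop'.eventually_ge_atTop (max M 0)
  filter_upwards [h, eventually_ge_atTop (1:ℝ)] with x hx hx1
  have : (max M 0) * 1 ≤ (Φ x / x) * x := by
    apply mul_le_mul hx hx1 zero_le_one (le_trans (le_max_right M 0) hx)
  rw [div_mul_cancel₀] at this
  · calc M ≤ max M 0 := le_max_left _ _
    _ = max M 0 * 1 := (mul_one _).symm
    _ ≤ Φ x := this
  · linarith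

end YoungFunction


variable {X : Type*} [MeasurableSpace X]

namespace NAH

variable {μ : Measure X}

lemma halve (hna : NonAtomicOn μ Set.univ) {A : Set X} (hA : MeasurableSet A)
    (h0 : 0 < μ A) (hfin : μ A ≠ ⊤) :
    ∃ B : Set X, B ⊆ A ∧ MeasurableSet B ∧ 0 < μ B ∧ 2 * μ B ≤ μ A := by
  have hnotatom := hna A (Set.subset_univ A)
  rw [IsAtomSet] at hnotatom
  push_neg at hnotatom
  obtain ⟨B, hBm, hBA, hB0, hBA'⟩ := hnotatom hA h0
  have hBfin : μ B ≠ ⊤ := fun h => hfin (top_le_iff.1 (h ▸ measure_mono hBA))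
  have hsplit : μ (A \ B) = μ A - μ B := measure_diff hBA hBm.nullMeasurableSet hBfin
  have hABpos : 0 < μ (A \ B) := by
    rw [hsplit]
    exact tsub_pos_of_lt (lt_of_le_of_ne (measure_mono hBA) hBA')
  rcases le_total (μ B) (μ (A \ B)) with h | h
  · refine ⟨B, hBA, hBm, pos_iff_ne_zero.2 hB0, ?_⟩
    have : μ B + μ (A \ B) = μ A := by
      rw [hsplit, add_tsub_cancel_of_le (measure_mono hBA)]
    calc 2 * μ B = μ B + μ B := two_mul _
    _ ≤ μ B + μ (A \ B) := by gcongr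
    _ = μ A := this
  · refine ⟨A \ B, Set.diff_subset, hA.diff hBm, hABpos, ?_⟩
    have : μ B + μ (A \ B) = μ A := by
      rw [hsplit, add_tsub_cancel_of_le (measure_mono hBA)]
    calc 2 * μ (A \ B) = μ (A \ B) + μ (A \ B) := two_mul _
    _ ≤ μ B + μ (A \ B) := by gcongr
    _ = μ A := this

lemma exists_small (hna : NonAtomicOn μ Set.univ) {A : Set X} (hA : MeasurableSet A)
    (h0 : 0 < μ A) (hfin : μ A ≠ ⊤) {η : ℝ≥0∞} (hη : 0 < η) :
    ∃ B : Set X, B ⊆ A ∧ MeasurableSet B ∧ 0 < μ B ∧ μ B < η := by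
  -- iterate halving n times
  have key : ∀ n : ℕ, ∃ B : Set X, B ⊆ A ∧ MeasurableSet B ∧ 0 < μ B ∧
      2 ^ n * μ B ≤ μ A := by
    intro n
    induction n with
    | zero => exact ⟨A, subset_rfl, hA, h0, by simpa using le_rfl⟩
    | succ n ih =>
      obtain ⟨B, hBA, hBm, hB0, hBle⟩ := ih
      have hBfin : μ B ≠ ⊤ := fun h => hfin (top_le_iff.1 (h ▸ measure_mono hBA))
      obtain ⟨C, hCB, hCm, hC0, hCle⟩ := halve hna hBm hB0 hBfin
      refine ⟨C, hCB.trans hBA, hCm, hC0, ?_⟩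
      calc 2 ^ (n+1) * μ C = 2 ^ n * (2 * μ C) := by ring
      _ ≤ 2 ^ n * μ B := by gcongr
      _ ≤ μ A := hBle
  obtain ⟨n, hn⟩ : ∃ n : ℕ, μ A < 2 ^ n * η := by
    rcases eq_top_or_lt_top η with rfl | hlt
    · exact ⟨0, by simpa using lt_top_iff_ne_top.2 hfin⟩
    · have hdiv : μ A / η ≠ ⊤ := (ENNReal.div_lt_top hfin hη.ne').ne
      obtain ⟨n, hn⟩ := ENNReal.exists_nat_gt hdiv
      refine ⟨n, ?_⟩
      have h2 : (n : ℝ≥0∞) ≤ 2 ^ n := by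
        exact_mod_cast Nat.le_of_lt_succ (Nat.lt_succ_of_le (Nat.le_of_lt (Nat.lt_two_pow_self)))
      calc μ A = μ A / η * η := by
            rw [ENNReal.div_mul_cancel hη.ne' hlt.ne]
      _ < n * η := by
            exact ENNReal.mul_lt_mul_left hη.ne' hlt.ne hn
      _ ≤ 2 ^ n * η := by gcongr
  obtain ⟨B, hBA, hBm, hB0, hBle⟩ := key n
  refine ⟨B, hBA, hBm, hB0, ?_⟩
  by_contra hcon
  push_neg at hcon
  have : 2 ^ n * η ≤ 2 ^ n * μ B := by gcongr
  exact absurd (this.trans hBle) (not_le.2 hn)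

end NAH

namespace NAH2

variable {μ : Measure X}

theorem sierpinski (hna : NonAtomicOn μ Set.univ) {A : Set X} (hA : MeasurableSet A)
    (hfin : μ A ≠ ⊤) {t : ℝ≥0∞} (ht : t ≤ μ A) :
    ∃ B : Set X, B ⊆ A ∧ MeasurableSet B ∧ μ B = t := by
  classical
  have htfin : t ≠ ⊤ := fun h => hfin (top_le_iff.1 (h ▸ ht))
  have halfadd : ∀ a : ℝ≥0∞, (a + a) / 2 = a := fun a => by
    rw [ENNReal.add_div, ENNReal.add_halves]
  -- the "greedy" supremum
  set G : Set X → ℝ≥0∞ := fun C =>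
    ⨆ (D : Set X) (_ : MeasurableSet D ∧ D ⊆ A ∧ C ⊆ D ∧ μ D ≤ t), μ D with hG
  have hGle : ∀ C, G C ≤ t := by
    intro C
    exact iSup₂_le fun D hD => hD.2.2.2
  have hstep : ∀ C : Set X, MeasurableSet C → C ⊆ A → μ C ≤ t →
      ∃ D : Set X, MeasurableSet D ∧ D ⊆ A ∧ C ⊆ D ∧ μ D ≤ t ∧
        (μ C + G C) / 2 ≤ μ D := by
    intro C hCm hCA hCt
    by_cases hcase : G C ≤ μ C
    · refine ⟨C, hCm, hCA, subset_rfl, hCt, ?_⟩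
      calc (μ C + G C) / 2 ≤ (μ C + μ C) / 2 := by gcongr
      _ = μ C := halfadd _
    · push_neg at hcase
      have hGtop : G C ≠ ⊤ := fun h => htfin (top_le_iff.1 (h ▸ hGle C))
      have hlt : (μ C + G C) / 2 < G C := by
        have h1 : μ C + G C < G C + G C := by
          exact ENNReal.add_lt_add_right hGtop hcase
        have h2 : (μ C + G C)/2 < (G C + G C)/2 := by
          rw [ENNReal.div_lt_iff (Or.inl (by norm_num)) (Or.inl (by norm_num))]
          calc μ C + G C < G C + G C := h1
          _ = (G C + G C) / 2 * 2 := by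
            rw [ENNReal.div_mul_cancel (by norm_num) (by norm_num)]
        calc (μ C + G C)/2 < (G C + G C)/2 := h2
        _ = G C := halfadd _
      rw [hG] at hlt
      simp only [lt_iSup_iff] at hlt
      obtain ⟨D, hD, hlt⟩ := hlt
      exact ⟨D, hD.1, hD.2.1, hD.2.2.1, hD.2.2.2, hlt.le⟩
  choose! Df h1 h2 h3 h4 h5 using hstep
  set T := {C : Set X // MeasurableSet C ∧ C ⊆ A ∧ μ C ≤ t} with hT
  set step : T → T := fun C =>
    ⟨Df C.1,
      h1 C.1 C.2.1 C.2.2.1 C.2.2.2,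
      h2 C.1 C.2.1 C.2.2.1 C.2.2.2,
      h4 C.1 C.2.1 C.2.2.1 C.2.2.2⟩ with hstepdef
  set seq : ℕ → T := fun n => Nat.rec ⟨∅, MeasurableSet.empty, Set.empty_subset A, by simp⟩
    (fun _ p => step p) n with hseqdef
  have hseqS : ∀ n, seq (n+1) = step (seq n) := fun n => rfl
  have hsub : ∀ n, (seq n).1 ⊆ (seq (n+1)).1 := by
    intro n
    exact h3 (seq n).1 (seq n).2.1 (seq n).2.2.1 (seq n).2.2.2
  have hgrow : ∀ n, (μ (seq n).1 + G (seq n).1) / 2 ≤ μ (seq (n+1)).1 := by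
    intro n
    exact h5 (seq n).1 (seq n).2.1 (seq n).2.2.1 (seq n).2.2.2
  have hmono : Monotone (fun n => (seq n).1) := monotone_nat_of_le_succ hsub
  set L : Set X := ⋃ n, (seq n).1 with hL
  have hLm : MeasurableSet L := MeasurableSet.iUnion (fun n => (seq n).2.1)
  have hLA : L ⊆ A := Set.iUnion_subset (fun n => (seq n).2.2.1)
  have hLsup : μ L = ⨆ n, μ (seq n).1 := Directed.measure_iUnion hmono.directed_le
  have hLt : μ L ≤ t := by
    rw [hLsup]; exact iSup_le (fun n => (seq n).2.2.2)
  refine ⟨L, hLA, hLm, ?_⟩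
  by_contra hne
  have hLlt : μ L < t := lt_of_le_of_ne hLt hne
  -- find a small piece in A \ L
  have hALm : MeasurableSet (A \ L) := hA.diff hLm
  have hALfin : μ (A \ L) ≠ ⊤ := fun h => hfin (top_le_iff.1 (h ▸ measure_mono Set.diff_subset))
  have hAL0 : 0 < μ (A \ L) := by
    by_contra h
    push_neg at h
    have h0 : μ (A \ L) = 0 := le_antisymm h zero_le
    have : μ A ≤ μ L := by
      calc μ A ≤ μ (L ∪ (A \ L)) := measure_mono (fun x hx => by
        by_cases hxL : x ∈ L
        · exact Or.inl hxL
        · exact Or.inr ⟨hx, hxL⟩)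
      _ ≤ μ L + μ (A \ L) := measure_union_le _ _
      _ = μ L := by rw [h0, add_zero]
    exact absurd (ht.trans this) (not_le.2 hLlt)
  obtain ⟨D₀, hD₀AL, hD₀m, hD₀0, hD₀lt⟩ :=
    NAH.exists_small hna hALm hAL0 hALfin (tsub_pos_of_lt hLlt)
  have hD₀fin : μ D₀ ≠ ⊤ := (hD₀lt.trans_le (le_top)).ne
  -- each step grows by at least μ D₀ / 2
  have hkey : ∀ n, μ (seq n).1 + μ D₀ / 2 ≤ μ (seq (n+1)).1 := by
    intro n
    have hdisj : Disjoint (seq n).1 D₀ := by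
      refine Set.disjoint_left.2 fun x hx hxD => ?_
      exact (hD₀AL hxD).2 (Set.mem_iUnion.2 ⟨n, hx⟩)
    have hunion : μ ((seq n).1 ∪ D₀) = μ (seq n).1 + μ D₀ :=
      measure_union hdisj hD₀m
    have hU : MeasurableSet ((seq n).1 ∪ D₀) ∧ ((seq n).1 ∪ D₀) ⊆ A ∧
        (seq n).1 ⊆ ((seq n).1 ∪ D₀) ∧ μ ((seq n).1 ∪ D₀) ≤ t := by
      refine ⟨(seq n).2.1.union hD₀m,
        Set.union_subset (seq n).2.2.1 (fun x hx => (hD₀AL hx).1),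
        Set.subset_union_left, ?_⟩
      rw [hunion]
      have hLn : μ (seq n).1 ≤ μ L :=
        measure_mono (Set.subset_iUnion (fun k => ((seq k).1 : Set X)) n)
      calc μ (seq n).1 + μ D₀ ≤ μ L + μ D₀ := add_le_add_left hLn _
      _ ≤ μ L + (t - μ L) := add_le_add_right hD₀lt.le _
      _ = t := add_tsub_cancel_of_le hLt
    have hGn : μ (seq n).1 + μ D₀ ≤ G (seq n).1 := by
      rw [← hunion, hG]
      exact le_iSup₂ (f := fun (D : Set X)
        (_ : MeasurableSet D ∧ D ⊆ A ∧ (seq n).1 ⊆ D ∧ μ D ≤ t) => μ D) _ hU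
    calc μ (seq n).1 + μ D₀ / 2
        = (μ (seq n).1 + (μ (seq n).1 + μ D₀)) / 2 := by
          rw [← add_assoc, ENNReal.add_div, halfadd]
    _ ≤ (μ (seq n).1 + G (seq n).1) / 2 := by gcongr
    _ ≤ μ (seq (n+1)).1 := hgrow n
  have hlin : ∀ n : ℕ, (n : ℝ≥0∞) * (μ D₀ / 2) ≤ μ (seq n).1 := by
    intro n
    induction n with
    | zero => simp
    | succ n ih =>
      push_cast
      calc ((n : ℝ≥0∞) + 1) * (μ D₀ / 2) = (n : ℝ≥0∞) * (μ D₀ / 2) + μ D₀ / 2 := by ring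
      _ ≤ μ (seq n).1 + μ D₀ / 2 := by gcongr
      _ ≤ μ (seq (n+1)).1 := hkey n
  -- contradiction with μ (seq n).1 ≤ t < ⊤
  have hd2 : μ D₀ / 2 ≠ 0 := by
    simp only [ne_eq, ENNReal.div_eq_zero_iff]
    push_neg
    exact ⟨hD₀0.ne', by norm_num⟩
  have hd2top : μ D₀ / 2 ≠ ⊤ :=
    (lt_of_le_of_lt ENNReal.half_le_self (lt_top_iff_ne_top.2 hD₀fin)).ne
  obtain ⟨n, hn⟩ := ENNReal.exists_nat_gt (ENNReal.div_lt_top htfin hd2).ne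
  have : t < (n : ℝ≥0∞) * (μ D₀ / 2) := by
    calc t = t / (μ D₀ / 2) * (μ D₀ / 2) := by
          rw [ENNReal.div_mul_cancel hd2 hd2top]
    _ < n * (μ D₀ / 2) := ENNReal.mul_lt_mul_left hd2 hd2top hn
  exact absurd ((this.trans_le (hlin n)).trans_le (seq n).2.2.2) (lt_irrefl t)

end NAH2

theorem disjoint_seq (hna : NonAtomicOn μ Set.univ) {A : Set X} (hA : MeasurableSet A)
    (hfin : μ A ≠ ⊤) (t : ℕ → ℝ≥0∞) (ht : ∀ n, t n ≤ μ A / 2 ^ (n + 1)) :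
    ∃ B : ℕ → Set X, (∀ n, MeasurableSet (B n)) ∧ (∀ n, B n ⊆ A) ∧
      Pairwise (Function.onFun Disjoint B) ∧ (∀ n, μ (B n) = t n) := by
  classical
  have hhalf : ∀ (a : ℝ≥0∞) (n : ℕ), a / 2 ^ (n+1) + a / 2 ^ (n+1) = a / 2 ^ n := by
    intro a n
    rw [← ENNReal.add_div, ← two_mul, pow_succ, mul_comm ((2:ℝ≥0∞)^n) 2,
      ENNReal.mul_div_mul_left _ _ (by norm_num) (by norm_num)]
  have hSier : ∀ C : Set X, MeasurableSet C → μ C ≠ ⊤ → ∀ τ : ℝ≥0∞, τ ≤ μ C →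
      ∃ B : Set X, B ⊆ C ∧ MeasurableSet B ∧ μ B = τ :=
    fun C h1 h2 τ h3 => NAH2.sierpinski hna h1 h2 h3
  choose! Bf hB1 hB2 hB3 using hSier
  set U : ℕ → Set X := fun n =>
    Nat.rec ∅ (fun n Un => Un ∪ Bf (A \ Un) (t n)) n with hU
  set B : ℕ → Set X := fun n => Bf (A \ U n) (t n) with hB
  have hUS : ∀ n, U (n + 1) = U n ∪ B n := fun n => rfl
  -- invariant on the accumulated set, and the per-step properties
  have hP : ∀ n, MeasurableSet (U n) ∧ U n ⊆ A ∧ μ (U n) + μ A / 2 ^ n ≤ μ A := by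
    intro n
    induction n with
    | zero =>
        refine ⟨MeasurableSet.empty, Set.empty_subset A, ?_⟩
        rw [show U 0 = (∅:Set X) from rfl]
        simp
    | succ n ih =>
      obtain ⟨hm, hsub, hinv⟩ := ih
      have hAUm : MeasurableSet (A \ U n) := hA.diff hm
      have hAUfin : μ (A \ U n) ≠ ⊤ :=
        fun h => hfin (top_le_iff.1 (h ▸ measure_mono Set.diff_subset))
      have htn : t n ≤ μ (A \ U n) := by
        have h1 : μ A / 2 ^ n ≤ μ A - μ (U n) := ENNReal.le_sub_of_add_le_left
          (fun h => hfin (top_le_iff.1 (h ▸ measure_mono hsub))) hinv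
        have h2 : μ A - μ (U n) = μ (A \ U n) :=
          (measure_diff hsub hm.nullMeasurableSet
            (fun h => hfin (top_le_iff.1 (h ▸ measure_mono hsub)))).symm
        calc t n ≤ μ A / 2 ^ (n+1) := ht n
        _ ≤ μ A / 2 ^ n := by gcongr <;> norm_num
        _ ≤ μ A - μ (U n) := h1
        _ = μ (A \ U n) := h2
      have hBn3 : μ (B n) = t n := hB3 (A \ U n) hAUm hAUfin (t n) htn
      have hBnm : MeasurableSet (B n) := hB2 (A \ U n) hAUm hAUfin (t n) htn
      have hBnsub : B n ⊆ A \ U n := hB1 (A \ U n) hAUm hAUfin (t n) htn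
      refine ⟨(hUS n) ▸ hm.union hBnm, (hUS n) ▸ Set.union_subset hsub
        (fun x hx => (hBnsub hx).1), ?_⟩
      rw [hUS]
      calc μ (U n ∪ B n) + μ A / 2 ^ (n+1)
          ≤ μ (U n) + μ (B n) + μ A / 2 ^ (n+1) := by
            gcongr
            exact measure_union_le _ _
      _ ≤ μ (U n) + μ A / 2 ^ (n+1) + μ A / 2 ^ (n+1) := by
            gcongr
            rw [hBn3]; exact ht n
      _ = μ (U n) + μ A / 2 ^ n := by rw [add_assoc, hhalf]
      _ ≤ μ A := hinv
  -- extract per-step properties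
  have hgood : ∀ n, B n ⊆ A \ U n ∧ MeasurableSet (B n) ∧ μ (B n) = t n := by
    intro n
    obtain ⟨hm, hsub, hinv⟩ := hP n
    have hAUm : MeasurableSet (A \ U n) := hA.diff hm
    have hAUfin : μ (A \ U n) ≠ ⊤ :=
      fun h => hfin (top_le_iff.1 (h ▸ measure_mono Set.diff_subset))
    have htn : t n ≤ μ (A \ U n) := by
      have h1 : μ A / 2 ^ n ≤ μ A - μ (U n) := ENNReal.le_sub_of_add_le_left
          (fun h => hfin (top_le_iff.1 (h ▸ measure_mono hsub))) hinv
      have h2 : μ A - μ (U n) = μ (A \ U n) :=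
        (measure_diff hsub hm.nullMeasurableSet
          (fun h => hfin (top_le_iff.1 (h ▸ measure_mono hsub)))).symm
      calc t n ≤ μ A / 2 ^ (n+1) := ht n
      _ ≤ μ A / 2 ^ n := by gcongr <;> norm_num
      _ ≤ μ A - μ (U n) := h1
      _ = μ (A \ U n) := h2
    exact ⟨hB1 (A \ U n) hAUm hAUfin (t n) htn, hB2 (A \ U n) hAUm hAUfin (t n) htn,
      hB3 (A \ U n) hAUm hAUfin (t n) htn⟩
  have hUmono : Monotone U := by
    apply monotone_nat_of_le_succ
    intro n
    rw [hUS]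
    exact Set.subset_union_left
  have hBU : ∀ n, B n ⊆ U (n+1) := by
    intro n
    rw [hUS]
    exact Set.subset_union_right
  have hdisj : ∀ m n, m < n → Disjoint (B m) (B n) := by
    intro m n hmn
    refine Set.disjoint_left.2 fun x hxm hxn => ?_
    have hxU : x ∈ U n := hUmono (Nat.succ_le_of_lt hmn) (hBU m hxm)
    exact ((hgood n).1 hxn).2 hxU
  refine ⟨B, fun n => (hgood n).2.1, fun n => fun x hx => ((hgood n).1 hx).1, ?_,
    fun n => (hgood n).2.2⟩
  intro i j hij
  rcases lt_or_gt_of_ne hij with h | h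
  · exact hdisj i j h
  · exact (hdisj j i h).symm

theorem density_piece {μ ν : Measure X} [SigmaFinite μ] [IsFiniteMeasure ν]
    (hac : ν ≪ μ) {A₀ : Set X} (hA₀ : MeasurableSet A₀) (hν : 0 < ν A₀) :
    ∃ δ : ℝ≥0∞, 0 < δ ∧ δ ≠ ⊤ ∧ ∃ A₁ : Set X, A₁ ⊆ A₀ ∧ MeasurableSet A₁ ∧ 0 < μ A₁ ∧
      ∀ B : Set X, B ⊆ A₁ → MeasurableSet B → δ * μ B ≤ ν B := by
  classical
  set w : X → ℝ≥0∞ := ν.rnDeriv μ with hw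
  have hwm : Measurable w := Measure.measurable_rnDeriv ν μ
  have hset : ∀ s : Set X, MeasurableSet s → ∫⁻ x in s, w x ∂μ = ν s := by
    intro s hs
    exact Measure.setLIntegral_rnDeriv' hac hs
  have hstep : ∃ m : ℕ, 0 < μ (A₀ ∩ {x | ((m : ℝ≥0∞) + 1)⁻¹ ≤ w x}) := by
    by_contra hcon
    push_neg at hcon
    have hz : ∀ m : ℕ, μ (A₀ ∩ {x | ((m : ℝ≥0∞) + 1)⁻¹ ≤ w x}) = 0 :=
      fun m => le_antisymm (hcon m) zero_le
    have hsubset : A₀ ∩ {x | 0 < w x} ⊆ ⋃ m : ℕ, A₀ ∩ {x | ((m : ℝ≥0∞) + 1)⁻¹ ≤ w x} := by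
      rintro x ⟨hxA, hx⟩
      obtain ⟨n, hn⟩ := ENNReal.exists_inv_nat_lt (hx.ne')
      refine Set.mem_iUnion.2 ⟨n, hxA, ?_⟩
      have : ((n : ℝ≥0∞) + 1)⁻¹ ≤ ((n : ℝ≥0∞))⁻¹ := by
        gcongr
        exact le_add_of_nonneg_right zero_le
      exact this.trans hn.le
    have hz2 : μ (A₀ ∩ {x | 0 < w x}) = 0 := by
      refine le_antisymm ?_ zero_le
      calc μ (A₀ ∩ {x | 0 < w x}) ≤ μ (⋃ m : ℕ, A₀ ∩ {x | ((m : ℝ≥0∞) + 1)⁻¹ ≤ w x}) :=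
            measure_mono hsubset
      _ ≤ ∑' m : ℕ, μ (A₀ ∩ {x | ((m : ℝ≥0∞) + 1)⁻¹ ≤ w x}) := measure_iUnion_le _
      _ = 0 := by simp [hz]
    have hae : w =ᵐ[μ.restrict A₀] 0 := by
      rw [Filter.EventuallyEq, ae_iff]
      simp only [Pi.zero_apply]
      rw [Measure.restrict_apply₀' hA₀.nullMeasurableSet]
      calc μ ({x | ¬ w x = 0} ∩ A₀) = μ (A₀ ∩ {x | 0 < w x}) := by
            congr 1
            ext x
            simp [Set.mem_inter_iff, and_comm, pos_iff_ne_zero]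
      _ = 0 := hz2
    have : ν A₀ = 0 := by
      rw [← hset A₀ hA₀]
      rw [lintegral_congr_ae hae]
      simp
    exact absurd this hν.ne'
  obtain ⟨m, hm⟩ := hstep
  set δ : ℝ≥0∞ := ((m : ℝ≥0∞) + 1)⁻¹ with hδ
  have hδ0 : 0 < δ :=
    ENNReal.inv_pos.2 (ENNReal.add_ne_top.2 ⟨ENNReal.natCast_ne_top m, ENNReal.one_ne_top⟩)
  have hδtop : δ ≠ ⊤ := by
    rw [hδ]
    simp
  refine ⟨δ, hδ0, hδtop, A₀ ∩ {x | δ ≤ w x}, Set.inter_subset_left,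
    hA₀.inter (hwm measurableSet_Ici), hm, ?_⟩
  intro B hBsub hBm
  rw [← hset B hBm]
  calc δ * μ B = ∫⁻ _ in B, δ ∂μ := (setLIntegral_const B δ).symm
  _ ≤ ∫⁻ x in B, w x ∂μ := by
      refine setLIntegral_mono hwm fun x hx => ?_
      exact (hBsub hx).2


end Aux

/-- over a non-atomic measure space, when `Φ₂ ⊀ Φ₁` the only bounded
weighted composition operator `M_{u,T} f = u·(f∘T)` is the zero operator. -/
theorem weighted_composition_zero_of_nonatomic
    {X : Type*} [MeasurableSpace X] (μ : Measure X) [SigmaFinite μ]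
    (hna : NonAtomicOn μ Set.univ)
    (Φ₁ Φ₂ : YoungFunction) (hw : ¬ YoungWeaker Φ₂ Φ₁)
    (T : X → X) (hT : Measurable T) (hns : μ.map T ≪ μ)
    (u : X → ℝ) (hu : Measurable u)
    (hb : OrliczBounded Φ₁ Φ₂ μ (fun f x => u x * f (T x))) :
    ∀ f : X → ℝ, MemOrlicz Φ₁ μ f →
      (fun x => u x * f (T x)) =ᵐ[μ] (0 : X → ℝ) := by
  classical
  intro f hf
  by_contra hcon
  obtain ⟨hfm, k₀, hk₀, hint⟩ := hf
  -- measurable representative of f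
  set f' : X → ℝ := hfm.mk f with hf'def
  have hf'm : Measurable f' := hfm.stronglyMeasurable_mk.measurable
  have hff' : f =ᵐ[μ] f' := hfm.ae_eq_mk
  -- u * (f ∘ T) =ᵐ u * (f' ∘ T)
  have hae1 : (fun x => u x * f (T x)) =ᵐ[μ] (fun x => u x * f' (T x)) := by
    set N : Set X := toMeasurable μ {x | f x ≠ f' x} with hNdef
    have hNm : MeasurableSet N := measurableSet_toMeasurable μ _
    have hNnull : μ N = 0 := by
      rw [hNdef, measure_toMeasurable]
      exact hff'
    have hTN : μ (T ⁻¹' N) = 0 := by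
      have h1 : μ.map T N = 0 := hns hNnull
      rwa [Measure.map_apply hT hNm] at h1
    rw [Filter.EventuallyEq, ae_iff]
    refine measure_mono_null ?_ hTN
    intro x hx
    simp only [Set.mem_setOf_eq] at hx
    by_contra hxN
    apply hx
    have hfx : f (T x) = f' (T x) := by
      by_contra hne
      exact hxN (subset_toMeasurable μ _ hne)
    rw [hfx]
  have hcon' : ¬ ((fun x => u x * f' (T x)) =ᵐ[μ] (0 : X → ℝ)) :=
    fun h => hcon (hae1.trans h)
  have hpos : 0 < μ {x | u x * f' (T x) ≠ 0} := by
    rw [Filter.EventuallyEq, ae_iff] at hcon'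
    simp only [Pi.zero_apply] at hcon'
    exact pos_iff_ne_zero.2 hcon'
  -- find ε = 1/(m+1) such that the set where |u| ≥ ε and |f'∘T| ≥ ε has positive measure
  have hcover : {x | u x * f' (T x) ≠ 0} ⊆
      ⋃ m : ℕ, {x | 1/((m:ℝ)+1) ≤ |u x| ∧ 1/((m:ℝ)+1) ≤ |f' (T x)|} := by
    intro x hx
    simp only [Set.mem_setOf_eq] at hx
    have hu0 : u x ≠ 0 := fun h => hx (by rw [h, zero_mul])
    have hf0 : f' (T x) ≠ 0 := fun h => hx (by rw [h, mul_zero])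
    have h1 : 0 < min |u x| |f' (T x)| :=
      lt_min (abs_pos.2 hu0) (abs_pos.2 hf0)
    obtain ⟨m, hm⟩ := exists_nat_one_div_lt h1
    exact Set.mem_iUnion.2 ⟨m, (hm.le.trans (min_le_left _ _)),
      (hm.le.trans (min_le_right _ _))⟩
  obtain ⟨m, hm⟩ : ∃ m : ℕ,
      0 < μ {x | 1/((m:ℝ)+1) ≤ |u x| ∧ 1/((m:ℝ)+1) ≤ |f' (T x)|} := by
    by_contra hc
    push_neg at hc
    have : μ {x | u x * f' (T x) ≠ 0} = 0 := by
      refine le_antisymm ?_ zero_le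
      calc μ {x | u x * f' (T x) ≠ 0}
          ≤ μ (⋃ m : ℕ, {x | 1/((m:ℝ)+1) ≤ |u x| ∧ 1/((m:ℝ)+1) ≤ |f' (T x)|}) :=
            measure_mono hcover
      _ ≤ ∑' m : ℕ, μ {x | 1/((m:ℝ)+1) ≤ |u x| ∧ 1/((m:ℝ)+1) ≤ |f' (T x)|} :=
            measure_iUnion_le _
      _ = 0 := by
            simp only [fun m : ℕ => le_antisymm (hc m) zero_le]
            exact tsum_zero
    exact absurd this hpos.ne'
  set ε : ℝ := 1/((m:ℝ)+1) with hεdef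
  have hε : 0 < ε := by positivity
  have hε1 : ε ≤ 1 := by
    rw [hεdef, div_le_one (by positivity)]
    linarith [Nat.cast_nonneg (α := ℝ) m]
  set G : Set X := {x | ε ≤ |u x| ∧ ε ≤ |f' (T x)|} with hGdef
  have hGm : MeasurableSet G := by
    refine MeasurableSet.inter ?_ ?_
    · exact measurableSet_le measurable_const hu.abs
    · exact measurableSet_le measurable_const ((hf'm.comp hT).abs)
  -- the set where |f'| ≥ ε, has finite measure
  set A₀ : Set X := {y | ε ≤ |f' y|} with hA₀def
  have hA₀m : MeasurableSet A₀ := measurableSet_le measurable_const hf'm.abs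
  have hA₀fin : μ A₀ < ⊤ := by
    have hint' : Integrable (fun x => Φ₁ (k₀ * f' x)) μ := by
      refine hint.congr ?_
      filter_upwards [hff'] with x hx
      rw [hx]
    have hsub : A₀ ⊆ {x | Φ₁ (k₀ * ε) ≤ Φ₁ (k₀ * f' x)} := by
      intro y hy
      simp only [Set.mem_setOf_eq] at hy ⊢
      have h1 : Φ₁ (k₀ * f' y) = Φ₁ (k₀ * |f' y|) := by
        rw [← Φ₁.abs_eq (k₀ * f' y), ← Φ₁.abs_eq (k₀ * |f' y|)]
        congr 1
        rw [abs_mul, abs_mul, abs_abs]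
      rw [h1]
      have hy' : ε ≤ |f' y| := hy
      exact Φ₁.mono (by positivity) (mul_le_mul_of_nonneg_left hy' hk₀.le)
    calc μ A₀ ≤ μ {x | Φ₁ (k₀ * ε) ≤ Φ₁ (k₀ * f' x)} := measure_mono hsub
    _ < ⊤ := hint'.measure_ge_lt_top (Φ₁.pos (by positivity : (0:ℝ) < k₀ * ε).ne')
  -- a positive finite-measure piece of G
  obtain ⟨l, hl⟩ : ∃ l : ℕ, 0 < μ (G ∩ spanningSets μ l) := by
    by_contra hc
    push_neg at hc
    have hGcov : G ⊆ ⋃ l : ℕ, (G ∩ spanningSets μ l) := by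
      intro x hx
      have : x ∈ ⋃ l, spanningSets μ l := by
        rw [iUnion_spanningSets]; trivial
      obtain ⟨l, hl⟩ := Set.mem_iUnion.1 this
      exact Set.mem_iUnion.2 ⟨l, hx, hl⟩
    have : μ G = 0 := by
      refine le_antisymm ?_ zero_le
      calc μ G ≤ μ (⋃ l : ℕ, (G ∩ spanningSets μ l)) := measure_mono hGcov
      _ ≤ ∑' l : ℕ, μ (G ∩ spanningSets μ l) := measure_iUnion_le _
      _ = 0 := by
            simp only [fun l : ℕ => le_antisymm (hc l) zero_le]
            exact tsum_zero
    exact absurd this hm.ne'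
  set F : Set X := G ∩ spanningSets μ l with hFdef
  have hFm : MeasurableSet F := hGm.inter (measurableSet_spanningSets μ l)
  have hF0 : 0 < μ F := hl
  have hFfin : μ F < ⊤ :=
    lt_of_le_of_lt (measure_mono Set.inter_subset_right) (measure_spanningSets_lt_top μ l)
  have hFT : F ⊆ T ⁻¹' A₀ := fun x hx => hx.1.2
  have hFu : ∀ x ∈ F, ε ≤ |u x| := fun x hx => hx.1.1
  -- the pushforward measure
  set ν : Measure X := (μ.restrict F).map T with hνdef
  have hνapp : ∀ s : Set X, MeasurableSet s → ν s = μ (T ⁻¹' s ∩ F) := by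
    intro s hs
    rw [hνdef, Measure.map_apply hT hs, Measure.restrict_apply (hT hs)]
  haveI : IsFiniteMeasure ν := by
    constructor
    rw [hνapp Set.univ MeasurableSet.univ]
    calc μ (T ⁻¹' Set.univ ∩ F) ≤ μ F := measure_mono Set.inter_subset_right
    _ < ⊤ := hFfin
  have hν_ac : ν ≪ μ := by
    refine Measure.AbsolutelyContinuous.mk (fun s hs hs0 => ?_)
    rw [hνapp s hs]
    have h1 : μ (T ⁻¹' s) = 0 := by
      have := hns hs0
      rwa [Measure.map_apply hT hs] at this
    exact measure_mono_null Set.inter_subset_left h1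
  have hνA₀ : 0 < ν A₀ := by
    rw [hνapp A₀ hA₀m, Set.inter_eq_self_of_subset_right hFT]
    exact hF0
  obtain ⟨δ, hδ0, hδtop, A₁, hA₁sub, hA₁m, hA₁0, hA₁den⟩ :=
    density_piece hν_ac hA₀m hνA₀
  have hA₁fin : μ A₁ ≠ ⊤ := (lt_of_le_of_lt (measure_mono hA₁sub) hA₀fin).ne
  -- choose the sequence z n via non-weakness, with diagonal index J n
  rw [YoungWeaker] at hw
  push_neg at hw
  set J : ℕ → ℕ := fun n => (Nat.unpair n).1 + 1 with hJdef
  have hJ1 : ∀ n, 1 ≤ (J n : ℝ) := by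
    intro n
    exact_mod_cast Nat.one_le_iff_ne_zero.2 (Nat.succ_ne_zero _)
  have haux : ∀ n : ℕ, ∃ x : ℝ, 1 ≤ x ∧
      Φ₁ (((J n : ℝ)/ε * 2^n) * x) < Φ₂ x := by
    intro n
    have hpos : (0:ℝ) < (J n : ℝ)/ε * 2^n := by positivity
    obtain ⟨x, hx1, hx2⟩ := hw ((J n : ℝ)/ε * 2^n) hpos 1 zero_le_one
    exact ⟨x, hx1, hx2⟩
  choose z hz1 hz2 using haux
  set y : ℕ → ℝ := fun n => (J n : ℝ)/ε * z n with hydef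
  have hy1 : ∀ n, 1 ≤ y n := by
    intro n
    have h1 : 1 ≤ (J n : ℝ)/ε := by
      rw [le_div_iff₀ hε]
      calc 1 * ε = ε := one_mul ε
      _ ≤ 1 := hε1
      _ ≤ (J n : ℝ) := hJ1 n
    calc (1:ℝ) = 1 * 1 := (one_mul 1).symm
    _ ≤ ((J n : ℝ)/ε) * z n := by
        apply mul_le_mul h1 (hz1 n) zero_le_one (by positivity)
  have hkey : ∀ n, Φ₁ (2^n * y n) < Φ₂ (z n) := by
    intro n
    have : 2^n * y n = ((J n : ℝ)/ε * 2^n) * z n := by rw [hydef]; ring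
    rw [this]
    exact hz2 n
  have hy0 : ∀ n, (0:ℝ) < 2^n * y n := by
    intro n
    exact mul_pos (pow_pos two_pos n) (lt_of_lt_of_le one_pos (hy1 n))
  have hΦpos : ∀ n, 0 < Φ₁ (2^n * y n) := fun n => Φ₁.pos (hy0 n).ne'
  -- disjoint sets B n of measure t n inside A₁
  set t : ℕ → ℝ≥0∞ := fun n =>
    min (ENNReal.ofReal (1 / Φ₁ (2^n * y n))) (μ A₁ / 2^(n+1)) with htdef
  obtain ⟨B, hBm, hBsub, hBdisj, hBmeas⟩ :=
    disjoint_seq hna hA₁m hA₁fin t (fun n => min_le_right _ _)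
  -- the test function f₁
  set F1 : X → ℝ≥0∞ := fun x =>
    ∑' n, (B n).indicator (fun _ => ENNReal.ofReal (y n)) x with hF1def
  have hF1m : Measurable F1 :=
    Measurable.ennreal_tsum (fun n => measurable_const.indicator (hBm n))
  set f₁ : X → ℝ := fun x => (F1 x).toReal with hf₁def
  have hf₁m : Measurable f₁ := hF1m.ennreal_toReal
  have hptw : ∀ n x, x ∈ B n → f₁ x = y n := by
    intro n x hx
    have h1 : F1 x = ENNReal.ofReal (y n) := by
      show (∑' k, (B k).indicator (fun _ => ENNReal.ofReal (y k)) x) = ENNReal.ofReal (y n)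
      rw [tsum_eq_single n (fun c hc => by
        have hxc : x ∉ B c := fun hxc => Set.disjoint_left.1 (hBdisj hc) hxc hx
        simp [Set.indicator_of_notMem hxc])]
      rw [Set.indicator_of_mem hx]
    show (F1 x).toReal = y n
    rw [h1]
    exact ENNReal.toReal_ofReal (le_trans zero_le_one (hy1 n))
  have hptw0 : ∀ x, (∀ n, x ∉ B n) → f₁ x = 0 := by
    intro x hx
    have h1 : F1 x = 0 := by
      show (∑' k, (B k).indicator (fun _ => ENNReal.ofReal (y k)) x) = 0
      convert tsum_zero with n
      simp [Set.indicator_of_notMem (hx n)]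
    show (F1 x).toReal = 0
    rw [h1, ENNReal.toReal_zero]
  -- f₁ belongs to the Orlicz space L^{Φ₁}
  have hmem : MemOrlicz Φ₁ μ f₁ := by
    refine ⟨hf₁m.aestronglyMeasurable, 1, one_pos, ?_⟩
    constructor
    · exact (Φ₁.continuous'.measurable.comp
        (measurable_const.mul hf₁m)).aestronglyMeasurable
    · show (∫⁻ x, ‖Φ₁ (1 * f₁ x)‖₊ ∂μ) < ⊤
      have hbound : ∀ x, (‖Φ₁ (1 * f₁ x)‖₊ : ℝ≥0∞) ≤
          ∑' n, (B n).indicator (fun _ => ENNReal.ofReal (Φ₁ (y n))) x := by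
        intro x
        by_cases hx : ∃ n, x ∈ B n
        · obtain ⟨n, hn⟩ := hx
          have h1 : f₁ x = y n := hptw n x hn
          have h2 : (‖Φ₁ (1 * f₁ x)‖₊ : ℝ≥0∞) = ENNReal.ofReal (Φ₁ (y n)) := by
            rw [one_mul, h1]
            exact (Real.enorm_eq_ofReal (Φ₁.nonneg _))
          rw [h2]
          calc ENNReal.ofReal (Φ₁ (y n))
              = (B n).indicator (fun _ => ENNReal.ofReal (Φ₁ (y n))) x := by
                rw [Set.indicator_of_mem hn]
          _ ≤ ∑' k, (B k).indicator (fun _ => ENNReal.ofReal (Φ₁ (y k))) x :=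
                ENNReal.le_tsum n
        · push_neg at hx
          have h1 : f₁ x = 0 := hptw0 x hx
          rw [one_mul, h1, Φ₁.zero]
          simp
      calc (∫⁻ x, ‖Φ₁ (1 * f₁ x)‖₊ ∂μ)
          ≤ ∫⁻ x, ∑' n, (B n).indicator (fun _ => ENNReal.ofReal (Φ₁ (y n))) x ∂μ :=
            lintegral_mono hbound
      _ = ∑' n, ∫⁻ x, (B n).indicator (fun _ => ENNReal.ofReal (Φ₁ (y n))) x ∂μ :=
            lintegral_tsum (fun n => (measurable_const.indicator (hBm n)).aemeasurable)
      _ = ∑' n, ENNReal.ofReal (Φ₁ (y n)) * μ (B n) := by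
            congr 1
            ext n
            rw [lintegral_indicator (hBm n), setLIntegral_const]
      _ ≤ ∑' n, ((2:ℝ≥0∞)⁻¹)^n := by
            refine ENNReal.tsum_le_tsum (fun n => ?_)
            rw [hBmeas n]
            calc ENNReal.ofReal (Φ₁ (y n)) * t n
                ≤ ENNReal.ofReal (Φ₁ (y n)) * ENNReal.ofReal (1 / Φ₁ (2^n * y n)) := by
                  gcongr
                  exact min_le_left _ _
            _ = ENNReal.ofReal (Φ₁ (y n) * (1 / Φ₁ (2^n * y n))) :=
                  (ENNReal.ofReal_mul (Φ₁.nonneg _)).symm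
            _ ≤ ((2:ℝ≥0∞)⁻¹)^n := by
                  have hsc : Φ₁ (y n) ≤ (1/2)^n * Φ₁ (2^n * y n) := by
                    have h1 : ((1:ℝ)/2)^n * (2^n * y n) = y n := by
                      rw [← mul_assoc, ← mul_pow]
                      norm_num
                    calc Φ₁ (y n) = Φ₁ (((1:ℝ)/2)^n * (2^n * y n)) := by rw [h1]
                    _ ≤ ((1:ℝ)/2)^n * Φ₁ (2^n * y n) :=
                        Φ₁.scale_le (by positivity) (by
                          apply pow_le_one₀ (by norm_num)
                          norm_num)
                  have h3 : Φ₁ (y n) * (1 / Φ₁ (2^n * y n)) ≤ (1/2)^n := by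
                    rw [mul_one_div, div_le_iff₀ (hΦpos n)]
                    linarith [hsc]
                  calc ENNReal.ofReal (Φ₁ (y n) * (1 / Φ₁ (2^n * y n)))
                      ≤ ENNReal.ofReal ((1/2)^n) := ENNReal.ofReal_le_ofReal h3
                  _ = ((2:ℝ≥0∞)⁻¹)^n := by
                      have h4 : ENNReal.ofReal ((1/2:ℝ)^n) = ((2:ℝ≥0∞)^n)⁻¹ := by
                        rw [one_div, inv_pow, ENNReal.ofReal_inv_of_pos (by positivity),
                          ENNReal.ofReal_pow (by norm_num)]
                        norm_num
                      rw [h4, ENNReal.inv_pow]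
      _ < ⊤ := by
            rw [ENNReal.tsum_geometric, ENNReal.one_sub_inv_two]
            exact ENNReal.inv_lt_top.2 (by norm_num)
  -- apply the boundedness hypothesis to f₁
  obtain ⟨Cb, hCb, hball⟩ := hb
  obtain ⟨_, k, hk, hint2⟩ := (hball f₁ hmem).1
  -- superlinearity threshold
  set aᵣ : ℝ := (μ A₁).toReal with haᵣdef
  have haᵣ0 : 0 < aᵣ := ENNReal.toReal_pos hA₁0.ne' hA₁fin
  have hA₁eq : μ A₁ = ENNReal.ofReal aᵣ := (ENNReal.ofReal_toReal hA₁fin).symm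
  have hsl : ∀ᶠ x : ℝ in atTop, (2/aᵣ) * x ≤ Φ₁ x := by
    filter_upwards [Φ₁.tendsto_atTop'.eventually_ge_atTop (2/aᵣ),
      eventually_gt_atTop (0:ℝ)] with x h1 h2
    calc (2/aᵣ) * x ≤ (Φ₁ x / x) * x := by
          exact mul_le_mul_of_nonneg_right h1 h2.le
    _ = Φ₁ x := div_mul_cancel₀ _ h2.ne'
  have hslN : ∀ᶠ n : ℕ in atTop, (2/aᵣ) * 2^n ≤ Φ₁ (2^n) :=
    (tendsto_pow_atTop_atTop_of_one_lt (by norm_num : (1:ℝ) < 2)).eventually hsl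
  obtain ⟨N, hN⟩ := eventually_atTop.1 hslN
  -- key term estimate
  have hterm : ∀ n, N ≤ n → (1:ℝ≥0∞) ≤ ENNReal.ofReal (Φ₂ (z n)) * t n := by
    intro n hn
    have hΦ₂z : Φ₁ (2^n * y n) ≤ Φ₂ (z n) := (hkey n).le
    rcases le_total (ENNReal.ofReal (1 / Φ₁ (2^n * y n))) (μ A₁ / 2^(n+1)) with hmin | hmin
    · have ht' : t n = ENNReal.ofReal (1 / Φ₁ (2^n * y n)) := min_eq_left hmin
      rw [ht', ← ENNReal.ofReal_mul (Φ₂.nonneg _)]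
      have h1 : (1:ℝ) ≤ Φ₂ (z n) * (1 / Φ₁ (2^n * y n)) := by
        rw [mul_one_div, le_div_iff₀ (hΦpos n), one_mul]
        exact hΦ₂z
      calc (1:ℝ≥0∞) = ENNReal.ofReal 1 := by simp
      _ ≤ ENNReal.ofReal (Φ₂ (z n) * (1 / Φ₁ (2^n * y n))) := ENNReal.ofReal_le_ofReal h1
    · have ht' : t n = μ A₁ / 2^(n+1) := min_eq_right hmin
      rw [ht']
      have h2n : (2:ℝ)^(n+1)/aᵣ ≤ Φ₁ ((2:ℝ)^n) := by
        have h1 := hN n hn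
        have h2 : (2:ℝ)^(n+1)/aᵣ = (2/aᵣ) * 2^n := by
          rw [pow_succ]
          field_simp
        rw [h2]
        exact h1
      have hchain : (2:ℝ)^(n+1)/aᵣ ≤ Φ₂ (z n) := by
        refine h2n.trans (le_trans ?_ hΦ₂z)
        refine Φ₁.mono (by positivity) ?_
        nlinarith [hy1 n, pow_pos (two_pos : (0:ℝ) < 2) n]
      have hpow0 : ((2:ℝ≥0∞))^(n+1) ≠ 0 := by positivity
      have hpowt : ((2:ℝ≥0∞))^(n+1) ≠ ⊤ := ENNReal.pow_ne_top (by norm_num)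
      calc (1:ℝ≥0∞) = (2:ℝ≥0∞)^(n+1) / (2:ℝ≥0∞)^(n+1) := (ENNReal.div_self hpow0 hpowt).symm
      _ = ENNReal.ofReal ((2:ℝ)^(n+1)/aᵣ) * ENNReal.ofReal aᵣ / (2:ℝ≥0∞)^(n+1) := by
            rw [← ENNReal.ofReal_mul (by positivity), div_mul_cancel₀ _ haᵣ0.ne']
            congr 1
            rw [ENNReal.ofReal_pow (by norm_num)]
            norm_num
      _ ≤ ENNReal.ofReal (Φ₂ (z n)) * ENNReal.ofReal aᵣ / (2:ℝ≥0∞)^(n+1) := by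
            gcongr
      _ = ENNReal.ofReal (Φ₂ (z n)) * (μ A₁ / 2^(n+1)) := by
            rw [hA₁eq, mul_div_assoc]
  -- the disjoint pieces and the lower bound for the integral
  set Cs : ℕ → Set X := fun n => T ⁻¹' (B n) ∩ F with hCsdef
  have hCsm : ∀ n, MeasurableSet (Cs n) := fun n => (hT (hBm n)).inter hFm
  have hCsdisj : Pairwise (Function.onFun Disjoint Cs) := by
    intro i j hij
    exact ((hBdisj hij).preimage T).mono Set.inter_subset_left Set.inter_subset_left
  set g : X → ℝ≥0∞ := fun x => (‖Φ₂ (k * (u x * f₁ (T x)))‖₊ : ℝ≥0∞) with hgdef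
  have hgm : Measurable g := by
    have h1 : Measurable fun x => Φ₂ (k * (u x * f₁ (T x))) :=
      Φ₂.continuous'.measurable.comp
        (measurable_const.mul (hu.mul (hf₁m.comp hT)))
    exact h1.nnnorm.coe_nnreal_ennreal
  have htop : (∫⁻ x, g x ∂μ) < ⊤ := hint2.2
  set a : ℕ → ℝ≥0∞ := fun n => ∫⁻ x in Cs n, g x ∂μ with hadef
  have hsum : ∑' n, a n ≤ ∫⁻ x, g x ∂μ := by
    calc ∑' n, a n = ∫⁻ x in ⋃ n, Cs n, g x ∂μ := (lintegral_iUnion hCsm hCsdisj g).symm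
    _ ≤ ∫⁻ x, g x ∂μ := setLIntegral_le_lintegral _ _
  have htsum_ne : (∑' n, a n) ≠ ⊤ := by
    intro h
    rw [h] at hsum
    exact htop.ne (top_le_iff.1 hsum)
  have hfinset : {n | δ ≤ a n}.Finite :=
    ENNReal.finite_const_le_of_tsum_ne_top htsum_ne hδ0.ne'
  -- choose j₀ with 1 ≤ k * (j₀ + 1)
  obtain ⟨j₀, hj₀⟩ := exists_nat_ge (1/k)
  have hkj : (1:ℝ) ≤ k * ((j₀:ℝ) + 1) := by
    rw [div_le_iff₀ hk] at hj₀
    nlinarith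
  have hyval : ∀ n, y n = (J n : ℝ)/ε * z n := fun n => rfl
  have hz0 : ∀ n, 0 < z n := fun n => lt_of_lt_of_le one_pos (hz1 n)
  -- a n is at least δ on an infinite set of indices
  have hlarge : ∀ n, N ≤ n → J n = j₀ + 1 → δ ≤ a n := by
    intro n hn hJn
    have hptg : ∀ x ∈ Cs n, ENNReal.ofReal (Φ₂ (z n)) ≤ g x := by
      intro x hx
      obtain ⟨hxT, hxF⟩ := hx
      have hfT : f₁ (T x) = y n := hptw n (T x) hxT
      have hux : ε ≤ |u x| := hFu x hxF
      have hyn0 : (0:ℝ) < y n := lt_of_lt_of_le one_pos (hy1 n)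
      have habs : z n ≤ |k * (u x * y n)| := by
        have h1 : |k * (u x * y n)| = k * |u x| * y n := by
          rw [abs_mul, abs_mul, abs_of_pos hk, abs_of_pos hyn0]
          ring
        rw [h1]
        have h3 : k * ε * y n = (k * (J n : ℝ)) * z n := by
          rw [hyval n]
          field_simp
        have h4 : z n ≤ (k * (J n : ℝ)) * z n := by
          have h5 : (1:ℝ) ≤ k * (J n : ℝ) := by
            rw [hJn]
            push_cast
            exact hkj
          nlinarith [hz0 n]
        have h6 : k * ε * y n ≤ k * |u x| * y n := by
          have h7 := mul_le_mul_of_nonneg_left hux hk.le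
          nlinarith
        linarith
      calc ENNReal.ofReal (Φ₂ (z n))
          ≤ ENNReal.ofReal (Φ₂ (|k * (u x * y n)|)) := by
            exact ENNReal.ofReal_le_ofReal (Φ₂.mono (hz0 n).le habs)
      _ = ENNReal.ofReal (Φ₂ (k * (u x * y n))) := by rw [Φ₂.abs_eq]
      _ = g x := by
            show _ = (‖Φ₂ (k * (u x * f₁ (T x)))‖₊ : ℝ≥0∞)
            rw [hfT]; exact (Real.enorm_eq_ofReal (Φ₂.nonneg _)).symm
    calc δ = δ * 1 := (mul_one δ).symm
    _ ≤ δ * (ENNReal.ofReal (Φ₂ (z n)) * t n) := mul_le_mul_right (hterm n hn) δ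
    _ = ENNReal.ofReal (Φ₂ (z n)) * (δ * t n) := by ring
    _ ≤ ENNReal.ofReal (Φ₂ (z n)) * ν (B n) := by
          refine mul_le_mul_right ?_ _
          have := hA₁den (B n) (hBsub n) (hBm n)
          rwa [hBmeas n] at this
    _ = ENNReal.ofReal (Φ₂ (z n)) * μ (Cs n) := by rw [hνapp (B n) (hBm n)]
    _ = ∫⁻ _x in Cs n, ENNReal.ofReal (Φ₂ (z n)) ∂μ := (setLIntegral_const _ _).symm
    _ ≤ ∫⁻ x in Cs n, g x ∂μ := setLIntegral_mono hgm hptg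
  have hinf : {n | δ ≤ a n}.Infinite := by
    have h1 : (Set.range (fun i : ℕ => Nat.pair j₀ i)).Infinite :=
      Set.infinite_range_of_injective (fun i i' h => (Nat.pair_eq_pair.1 h).2)
    have h2 : ((Set.range (fun i : ℕ => Nat.pair j₀ i)) \ {n | n < N}).Infinite :=
      h1.diff (Set.finite_lt_nat N)
    refine h2.mono ?_
    rintro n ⟨⟨i, rfl⟩, hnN⟩
    have hNle : N ≤ Nat.pair j₀ i := not_lt.1 (by simpa using hnN)
    have hJn : J (Nat.pair j₀ i) = j₀ + 1 := by
      show (Nat.unpair (Nat.pair j₀ i)).1 + 1 = j₀ + 1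
      rw [Nat.unpair_pair]
    exact hlarge _ hNle hJn
  exact hinf hfinset
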